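/- Every 101-avoiding ascent sequence is a restricted growth function. -/

import Mathlib

def ascents (l : List ℕ) : ℕ :=
  ((l.zip l.tail).filter (fun p => p.1 < p.2)).length

def IsAscSeq (l : List ℕ) : Prop :=
  l.getD 0 0 = 0 ∧
  ∀ k, k < l.length → 0 < k → l.getD k 0 ≤ ascents (l.take k) + 1

def IsRGF (l : List ℕ) : Prop :=
  l.getD 0 0 = 0 ∧
  ∀ k, k < l.length → ∀ j, l.getD k 0 = j + 1 → ∃ i, i < k ∧ l.getD i 0 = j

def SelfModified (l : List ℕ) : Prop :=
  IsAscSeq l ∧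
  ∀ k, k < l.length → 0 < k →
    l.getD k 0 ≤ l.getD (k - 1) 0 ∨ l.getD k 0 = ascents (l.take k) + 1

def Contains101 (l : List ℕ) : Prop :=
  ∃ i j k, i < j ∧ j < k ∧ k < l.length ∧
    l.getD i 0 = l.getD k 0 ∧ l.getD j 0 < l.getD k 0

def Contains0101 (l : List ℕ) : Prop :=
  ∃ i j k m, i < j ∧ j < k ∧ k < m ∧ m < l.length ∧
    l.getD i 0 = l.getD k 0 ∧ l.getD j 0 = l.getD m 0 ∧ l.getD i 0 < l.getD j 0

def Contains1010 (l : List ℕ) : Prop :=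
  ∃ i j k m, i < j ∧ j < k ∧ k < m ∧ m < l.length ∧
    l.getD i 0 = l.getD k 0 ∧ l.getD j 0 = l.getD m 0 ∧ l.getD j 0 < l.getD i 0

/-- The view of position `i` in the sequence `a`: the number of indices `j > i` such
that `a j` strictly exceeds all entries `a k` for `i ≤ k < j`.  This agrees with the
recursive definition `v i = v j + 1` for `j` the least index `> i` with `a j > a i`. -/
def view {α : Type*} [LinearOrder α] [Inhabited α] (a : List α) (i : ℕ) : ℕ :=
  ((List.range a.length).filter (fun j =>
    decide (i < j ∧ ∀ k, k < j → i ≤ k → a.getD k default < a.getD j default))).length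

/-- The panorama of `a`: the views of the positions of `a`, listed grouped by entry
value from largest value to smallest, positions within a group in increasing order. -/
def pan {α : Type*} [LinearOrder α] [Inhabited α] (a : List α) : List ℕ :=
  ((List.range a.length).mergeSort (fun i j =>
    decide (a.getD j default < a.getD i default ∨
      (a.getD i default = a.getD j default ∧ i ≤ j)))).map (view a)

/-- A square matrix of natural numbers, given by a dimension and an entry function
(indices are 0-based; entries with an index `≥ d` are irrelevant/zero). -/
structure FMat where
  d : ℕ
  entry : ℕ → ℕ → ℕ

/-- 0-based index of the first row whose rightmost entry is nonzero. -/
noncomputable def mindex (M : FMat) : ℕ :=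
  sInf {i | M.entry i (M.d - 1) ≠ 0}

/-- One step of the recursive bijection from ascent sequences to Fishburn matrices,
with cases AM1, AM2, AM3 (0-based indices). -/
noncomputable def fStep (M : FMat) (a : ℕ) : FMat :=
  if a ≤ mindex M then
    -- AM1: increase entry (a, d-1)
    ⟨M.d, fun i j => M.entry i j + if i = a ∧ j = M.d - 1 then 1 else 0⟩
  else if a = M.d then
    -- AM2: append a new row and column, with 1 in the new diagonal entry
    ⟨M.d + 1, fun i j =>
      if i = M.d ∨ j = M.d then (if i = M.d ∧ j = M.d then 1 else 0)
      else M.entry i j⟩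
  else
    -- AM3: insert a new row and column at index a
    ⟨M.d + 1, fun i j =>
      if i = a then (if j = M.d then 1 else 0)
      else if j = a then (if i < a then M.entry i (M.d - 1) else 0)
      else if j = M.d ∧ i < a then 0
      else M.entry (if i < a then i else i - 1) (if j < a then j else j - 1)⟩

/-- The map from ascent sequences to Fishburn matrices. -/
noncomputable def fAM (l : List ℕ) : FMat :=
  l.tail.foldl fStep ⟨1, fun i j => if i = 0 ∧ j = 0 then 1 else 0⟩

/-- Fishburn matrix: upper triangular (and supported on `[0,d) × [0,d)`),
with no zero row and no zero column. -/
def IsFishburn (M : FMat) : Prop :=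
  (∀ i j, (M.d ≤ i ∨ M.d ≤ j ∨ j < i) → M.entry i j = 0) ∧
  (∀ i, i < M.d → ∃ j, j < M.d ∧ M.entry i j ≠ 0) ∧
  (∀ j, j < M.d → ∃ i, i < M.d ∧ M.entry i j ≠ 0)

def entrySum (M : FMat) : ℕ :=
  ∑ i ∈ Finset.range M.d, ∑ j ∈ Finset.range M.d, M.entry i j

/-- Reflection of a matrix through its antidiagonal. -/
def reflect (M : FMat) : FMat :=
  ⟨M.d, fun i j => if i < M.d ∧ j < M.d then M.entry (M.d - 1 - j) (M.d - 1 - i) else 0⟩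

/-- The canonical sequence `(0^{m₀₀}, 1^{m₁₁}, 0^{m₀₁}, 2^{m₂₂}, 1^{m₁₂}, 0^{m₀₂}, …)`
(0-based indices) associated to a matrix; this is `f_MA(M)` for `M ∈ RMatrices`. -/
def canonSeq (M : FMat) : List ℕ :=
  (List.range M.d).flatMap (fun j =>
    (List.range (j + 1)).reverse.flatMap (fun i => List.replicate (M.entry i j) i))

/-- The dual canonical sequence
`(0^{m_{d-1,d-1}}, 1^{m_{d-2,d-2}}, 0^{m_{d-2,d-1}}, …, (d-1)^{m_{0,0}}, …, 0^{m_{0,d-1}})`,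
i.e. `f_MA` applied to the antidiagonal reflection of `M`. -/
def dualCanonSeq (M : FMat) : List ℕ :=
  (List.range M.d).flatMap (fun j =>
    (List.range (j + 1)).reverse.flatMap (fun i =>
      List.replicate (M.entry (M.d - 1 - j) (M.d - 1 - i)) i))

/-- A matrix is SE-free if it has no pair of nonzero entries `m i j`, `m i' j'`
with `i < i'`, `j < j'` and `i' ≤ j`. -/
def SEFree (M : FMat) : Prop :=
  ¬ ∃ i j i' j', i < i' ∧ j < j' ∧ i' ≤ j ∧ j' < M.d ∧
    M.entry i j ≠ 0 ∧ M.entry i' j' ≠ 0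

/-- Generalized ballot sequence (Yamanouchi word): in every prefix, each value `j+1`
occurs at most as often as `j`. -/
def IsBallot (l : List ℕ) : Prop :=
  ∀ k j, (l.take k).count (j + 1) ≤ (l.take k).count j

lemma ascents_cons_cons (x y : ℕ) (t : List ℕ) :
    ascents (x :: y :: t) = (if x < y then 1 else 0) + ascents (y :: t) := by
  simp only [ascents, List.tail_cons, List.zip_cons_cons, List.filter_cons]
  split <;> simp_all <;> omega

lemma ascents_concat : ∀ (t : List ℕ) (z x : ℕ),
    ascents (z :: (t ++ [x])) = ascents (z :: t) + if (z :: t).getD t.length 0 < x then 1 else 0 := by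
  intro t
  induction t with
  | nil =>
    intro z x
    by_cases h : z < x <;> simp [ascents, List.getD, h]
  | cons w t ih =>
    intro z x
    rw [List.cons_append, ascents_cons_cons, ih w x, ascents_cons_cons]
    have : (z :: w :: t).getD (w :: t).length 0 = (w :: t).getD t.length 0 := by
      simp [List.getD]
    rw [this]
    omega

lemma take_succ_getD (l : List ℕ) (k : ℕ) (hk : k < l.length) :
    l.take (k+1) = l.take k ++ [l.getD k 0] := by
  rw [List.take_succ, List.getElem?_eq_getElem hk, List.getD_eq_getElem l 0 hk]
  simp

lemma getD_take' (l : List ℕ) (k i : ℕ) (hik : i < k) : (l.take k).getD i 0 = l.getD i 0 := by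
  simp [List.getD, List.getElem?_take, hik]

lemma ascents_take_succ (l : List ℕ) (k : ℕ) (hk1 : 1 ≤ k) (hk : k < l.length) :
    ascents (l.take (k+1)) =
      ascents (l.take k) + if l.getD (k-1) 0 < l.getD k 0 then 1 else 0 := by
  rw [take_succ_getD l k hk]
  obtain ⟨z, t, ht⟩ : ∃ z t, l.take k = z :: t := by
    cases hl : l.take k with
    | nil =>
      have : (l.take k).length = min k l.length := List.length_take
      rw [hl] at this
      simp at this
      omega
    | cons z t => exact ⟨z, t, rfl⟩
  have hlen : t.length = k - 1 := by
    have : (l.take k).length = min k l.length := List.length_take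
    rw [ht] at this
    simp at this
    omega
  have hlast : (z :: t).getD t.length 0 = l.getD (k-1) 0 := by
    rw [← ht, hlen, getD_take' l k (k-1) (by omega)]
  rw [ht, List.cons_append, ascents_concat, hlast]

def pmax (l : List ℕ) (k : ℕ) : ℕ := (Finset.range k).sup (fun i => l.getD i 0)

lemma pmax_succ (l : List ℕ) (k : ℕ) : pmax l (k+1) = max (l.getD k 0) (pmax l k) := by
  simp [pmax, Finset.range_add_one]

lemma le_pmax (l : List ℕ) {i k : ℕ} (h : i < k) : l.getD i 0 ≤ pmax l k :=
  Finset.le_sup (f := fun i => l.getD i 0) (Finset.mem_range.mpr h)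

theorem avoids101_isRGF (l : List ℕ) (h : IsAscSeq l) (h101 : ¬ Contains101 l) :
    IsRGF l := by
  obtain ⟨h0, hasc⟩ := h
  refine ⟨h0, ?_⟩
  have key : ∀ k, 1 ≤ k → k ≤ l.length →
      ascents (l.take k) ≤ pmax l k ∧ ∀ v ≤ pmax l k, ∃ i < k, l.getD i 0 = v := by
    intro k
    induction k with
    | zero => omega
    | succ k ih =>
      intro _ hkl
      rcases Nat.eq_or_lt_of_le (show 1 ≤ k + 1 from by omega) with h1 | h1
      · -- base case k = 0
        have hk0 : k = 0 := by omega
        subst hk0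
        have hM1 : pmax l 1 = 0 := by
          rw [show (1:ℕ) = 0 + 1 from rfl, pmax_succ, h0]
          simp [pmax]
        constructor
        · rw [hM1]
          have h1' : l.take 1 = [l.getD 0 0] := by
            rw [show (1:ℕ) = 0 + 1 from rfl, take_succ_getD l 0 (by omega)]
            simp
          rw [h1']
          simp [ascents]
        · intro v hv
          rw [hM1] at hv
          exact ⟨0, by omega, by omega⟩
      · -- inductive step, 1 ≤ k
        have hk1 : 1 ≤ k := by omega
        obtain ⟨ihasc, ihsurj⟩ := ih hk1 (by omega)
        have hkl' : k < l.length := by omega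
        have hMsucc := pmax_succ l k
        have hrec := ascents_take_succ l k hk1 hkl'
        by_cases hcmp : l.getD (k-1) 0 < l.getD k 0
        · have hbound : l.getD k 0 ≤ ascents (l.take k) + 1 := hasc k hkl' (by omega)
          have hak : l.getD k 0 = pmax l k + 1 := by
            by_contra hne
            have hle : l.getD k 0 ≤ pmax l k := by omega
            obtain ⟨i, hi, hiv⟩ := ihsurj (l.getD k 0) hle
            have hine : i ≠ k - 1 := by
              intro he; rw [he] at hiv; omega
            exact h101 ⟨i, k-1, k, by omega, by omega, hkl', hiv, hcmp⟩
          have hMs : pmax l (k+1) = pmax l k + 1 := by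
            rw [hMsucc, hak]; exact max_eq_left (by omega)
          rw [hrec, if_pos hcmp, hMs]
          constructor
          · omega
          · intro v hv
            rcases Nat.lt_or_ge v (pmax l k + 1) with h2 | h2
            · obtain ⟨i, hi, hiv⟩ := ihsurj v (by omega)
              exact ⟨i, by omega, hiv⟩
            · exact ⟨k, by omega, by omega⟩
        · have hak1 : l.getD (k-1) 0 ≤ pmax l k := le_pmax l (by omega)
          have hMeq : pmax l (k+1) = pmax l k := by
            rw [hMsucc]; exact max_eq_right (by omega)
          rw [hrec, if_neg hcmp, hMeq]
          constructor
          · omega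
          · intro v hv
            obtain ⟨i, hi, hiv⟩ := ihsurj v hv
            exact ⟨i, by omega, hiv⟩
  intro k hk j hkj
  have hk0 : 0 < k := by
    rcases Nat.eq_zero_or_pos k with h' | h'
    · rw [h', h0] at hkj; omega
    · exact h'
  obtain ⟨kasc, ksurj⟩ := key k (by omega) (le_of_lt hk)
  have hbound : l.getD k 0 ≤ ascents (l.take k) + 1 := hasc k hk hk0
  obtain ⟨i, hi, hiv⟩ := ksurj j (by omega)
  exact ⟨i, hi, hiv⟩
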